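/- (two-color theorem of laminarity) Let N' be a nonempty subset of a finite set N with |N'| = 2k-1 or |N'| = 2k for some k ≥ 1, and let C be a laminar family of nonempty subsets of N. Then N' can be partitioned into sets B and W = N' \ B with |B| = k such that for every c ∈ C, ||B ∩ c| - |W ∩ c|| ≤ 1. -/

import Mathlib

open Finset

/-- `B` is a good 2-coloring of ground set `p` w.r.t. the family `C`. -/
def GoodCol {α : Type*} [DecidableEq α] (C : Set (Finset α)) (p B : Finset α) : Prop :=
  ∀ c ∈ C, |((B ∩ c).card : ℤ) - (((p \ B) ∩ c).card : ℤ)| ≤ 1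

lemma split_target (a t b : ℕ) (h1 : a + t ≤ 2*b+1) (h2 : 2*b ≤ a+t+1) :
    ∃ b1 b2 : ℕ, b1 + b2 = b ∧ a ≤ 2*b1+1 ∧ 2*b1 ≤ a+1 ∧ t ≤ 2*b2+1 ∧ 2*b2 ≤ t+1 := by
  rcases le_or_gt (a+t) (2*b) with h | h
  · exact ⟨(a+1)/2, b - (a+1)/2, by omega, by omega, by omega, by omega, by omega⟩
  · exact ⟨a/2, b - a/2, by omega, by omega, by omega, by omega, by omega⟩

lemma combine {α : Type*} [DecidableEq α] (C : Set (Finset α)) (P : Finset (Finset α)) :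
    (∀ p1 ∈ P, ∀ p2 ∈ P, p1 ≠ p2 → p1 ∩ p2 = ∅) →
    (∀ p ∈ P, ∀ b : ℕ, p.card ≤ 2*b + 1 → 2*b ≤ p.card + 1 →
       ∃ B ⊆ p, B.card = b ∧ GoodCol C p B) →
    ∀ b : ℕ, (P.biUnion id).card ≤ 2*b+1 → 2*b ≤ (P.biUnion id).card + 1 →
    ∃ B ⊆ P.biUnion id, B.card = b ∧ ∀ p ∈ P, GoodCol C p (B ∩ p) := by
  classical
  induction P using Finset.induction_on with
  | empty =>
      intro _ _ b h1 h2
      simp only [Finset.biUnion_empty, Finset.card_empty] at h1 h2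
      have hb : b = 0 := by omega
      subst hb
      exact ⟨∅, Finset.Subset.refl _, rfl, fun p hp => absurd hp (Finset.notMem_empty p)⟩
  | @insert p P hpP ih =>
      intro hdisj hparts b h1 h2
      have hdisjPT : p ∩ P.biUnion id = ∅ := by
        ext x
        simp only [Finset.mem_inter, Finset.mem_biUnion, id_eq, Finset.notMem_empty, iff_false]
        rintro ⟨hxp, q, hq, hxq⟩
        have hne : p ≠ q := by rintro rfl; exact hpP hq
        have := hdisj p (Finset.mem_insert_self _ _) q (Finset.mem_insert_of_mem hq) hne
        have : x ∈ p ∩ q := Finset.mem_inter.mpr ⟨hxp, hxq⟩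
        rw [hdisj p (Finset.mem_insert_self _ _) q (Finset.mem_insert_of_mem hq) hne] at this
        exact Finset.notMem_empty x this
      have hbu : (insert p P).biUnion id = p ∪ P.biUnion id := Finset.biUnion_insert
      have hdisj' : Disjoint p (P.biUnion id) :=
        Finset.disjoint_iff_inter_eq_empty.mpr hdisjPT
      have hcardU : ((insert p P).biUnion id).card = p.card + (P.biUnion id).card := by
        rw [hbu, Finset.card_union_of_disjoint hdisj']
      rw [hcardU] at h1 h2
      obtain ⟨b1, b2, hb12, ha1, ha2, ht1, ht2⟩ := split_target p.card (P.biUnion id).card b h1 h2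
      obtain ⟨B1, hB1sub, hB1card, hB1good⟩ :=
        hparts p (Finset.mem_insert_self _ _) b1 ha1 ha2
      obtain ⟨B2, hB2sub, hB2card, hB2good⟩ :=
        ih (fun p1 h1 p2 h2 hne => hdisj p1 (Finset.mem_insert_of_mem h1)
              p2 (Finset.mem_insert_of_mem h2) hne)
          (fun q hq => hparts q (Finset.mem_insert_of_mem hq)) b2 ht1 ht2
      refine ⟨B1 ∪ B2, ?_, ?_, ?_⟩
      · rw [hbu]; exact Finset.union_subset_union hB1sub hB2sub
      · have hd : Disjoint B1 B2 :=
          hdisj'.mono hB1sub hB2sub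
        rw [Finset.card_union_of_disjoint hd, hB1card, hB2card, hb12]
      · intro q hq
        rcases Finset.mem_insert.mp hq with rfl | hq'
        · have : (B1 ∪ B2) ∩ q = B1 := by
            rw [Finset.union_inter_distrib_right]
            have h1' : B1 ∩ q = B1 := Finset.inter_eq_left.mpr hB1sub
            have h2' : B2 ∩ q = ∅ := by
              apply Finset.eq_empty_of_forall_notMem
              intro x hx
              rcases Finset.mem_inter.mp hx with ⟨hx2, hxq⟩
              have hxT : x ∈ P.biUnion id := hB2sub hx2
              have : x ∈ q ∩ P.biUnion id := Finset.mem_inter.mpr ⟨hxq, hxT⟩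
              rw [hdisjPT] at this
              exact Finset.notMem_empty x this
            rw [h1', h2', Finset.union_empty]
          rw [this]; exact hB1good
        · have : (B1 ∪ B2) ∩ q = B2 ∩ q := by
            rw [Finset.union_inter_distrib_right]
            have h1' : B1 ∩ q = ∅ := by
              apply Finset.eq_empty_of_forall_notMem
              intro x hx
              rcases Finset.mem_inter.mp hx with ⟨hx1, hxq⟩
              have hxp : x ∈ p := hB1sub hx1
              have hxT : x ∈ P.biUnion id := Finset.mem_biUnion.mpr ⟨q, hq', hxq⟩
              have : x ∈ p ∩ P.biUnion id := Finset.mem_inter.mpr ⟨hxp, hxT⟩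
              rw [hdisjPT] at this
              exact Finset.notMem_empty x this
            rw [h1', Finset.empty_union]
          rw [this]; exact hB2good q hq'

lemma twoColorKey {α : Type*} [DecidableEq α] (C : Set (Finset α))
    (hlam : ∀ c1 ∈ C, ∀ c2 ∈ C, (c1 ∩ c2).Nonempty → c1 ⊆ c2 ∨ c2 ⊆ c1) :
    ∀ (n : ℕ) (S : Finset α), S.card ≤ n →
    ∀ b : ℕ, S.card ≤ 2*b+1 → 2*b ≤ S.card+1 →
    ∃ B ⊆ S, B.card = b ∧ GoodCol C S B := by
  classical
  intro n
  induction n with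
  | zero =>
      intro S hS b h1 h2
      have hS0 : S = ∅ := Finset.card_eq_zero.mp (Nat.le_zero.mp hS)
      have hb : b = 0 := by subst hS0; simp at h2; omega
      subst hS0; subst hb
      exact ⟨∅, Finset.Subset.refl _, rfl, fun c _ => by simp⟩
  | succ n ih =>
      intro S hS b h1 h2
      by_cases hsmall : S.card ≤ 1
      · -- small ground set
        interval_cases h : S.card
        · have hS0 : S = ∅ := Finset.card_eq_zero.mp h
          have hb : b = 0 := by omega
          subst hS0; subst hb
          exact ⟨∅, Finset.Subset.refl _, rfl, fun c _ => by simp⟩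
        · -- card = 1
          have hb : b = 0 ∨ b = 1 := by omega
          rcases hb with rfl | rfl
          · refine ⟨∅, Finset.empty_subset _, rfl, fun c _ => ?_⟩
            have h0 : ((∅ : Finset α) ∩ c).card = 0 := by simp
            have hle : ((S \ ∅) ∩ c).card ≤ 1 := by
              calc ((S \ ∅) ∩ c).card ≤ (S \ ∅).card := Finset.card_le_card Finset.inter_subset_left
                _ ≤ S.card := Finset.card_le_card (Finset.sdiff_subset)
                _ = 1 := h
            rw [abs_le]
            constructor <;> omega
          · refine ⟨S, Finset.Subset.refl _, h, fun c _ => ?_⟩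
            have hle : (S ∩ c).card ≤ 1 := by
              calc (S ∩ c).card ≤ S.card := Finset.card_le_card Finset.inter_subset_left
                _ = 1 := h
            have h0 : ((S \ S) ∩ c).card = 0 := by simp
            rw [abs_le]
            constructor <;> omega
      · -- main case : S.card ≥ 2
        push_neg at hsmall
        set D : Finset (Finset α) :=
          S.powerset.filter (fun d => d.Nonempty ∧ d ≠ S ∧ ∃ c ∈ C, c ∩ S = d) with hD
        set M : Finset (Finset α) := D.filter (fun d => ∀ d' ∈ D, d ⊆ d' → d = d') with hM
        set R : Finset α := S \ M.biUnion id with hR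
        set P : Finset (Finset α) := M ∪ R.image (fun x => {x}) with hP
        -- facts about D
        have hDsub : ∀ d ∈ D, d ⊆ S ∧ d.Nonempty ∧ d ≠ S ∧ ∃ c ∈ C, c ∩ S = d := by
          intro d hd
          rw [hD, Finset.mem_filter, Finset.mem_powerset] at hd
          exact ⟨hd.1, hd.2⟩
        have hMD : ∀ m ∈ M, m ∈ D ∧ ∀ d' ∈ D, m ⊆ d' → m = d' := by
          intro m hm
          rw [hM, Finset.mem_filter] at hm
          exact hm
        -- maximal elements are pairwise disjoint
        have hMdisj : ∀ m1 ∈ M, ∀ m2 ∈ M, m1 ≠ m2 → m1 ∩ m2 = ∅ := by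
          intro m1 hm1 m2 hm2 hne
          by_contra hcon
          obtain ⟨x, hx⟩ := Finset.nonempty_iff_ne_empty.mpr hcon
          obtain ⟨hm1D, hm1max⟩ := hMD m1 hm1
          obtain ⟨hm2D, hm2max⟩ := hMD m2 hm2
          obtain ⟨_, _, _, c1, hc1, hc1m⟩ := hDsub m1 hm1D
          obtain ⟨_, _, _, c2, hc2, hc2m⟩ := hDsub m2 hm2D
          have hint : (c1 ∩ c2).Nonempty := by
            refine ⟨x, Finset.mem_inter.mpr ⟨?_, ?_⟩⟩
            · have := (Finset.mem_inter.mp hx).1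
              rw [← hc1m] at this
              exact (Finset.mem_inter.mp this).1
            · have := (Finset.mem_inter.mp hx).2
              rw [← hc2m] at this
              exact (Finset.mem_inter.mp this).1
          rcases hlam c1 hc1 c2 hc2 hint with hsub | hsub
          · have : m1 ⊆ m2 := by
              rw [← hc1m, ← hc2m]
              exact Finset.inter_subset_inter hsub (Finset.Subset.refl _)
            exact hne (hm1max m2 hm2D this)
          · have : m2 ⊆ m1 := by
              rw [← hc1m, ← hc2m]
              exact Finset.inter_subset_inter hsub (Finset.Subset.refl _)
            exact hne ((hm2max m1 hm1D this).symm)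
        -- P facts
        have hPdisj : ∀ p1 ∈ P, ∀ p2 ∈ P, p1 ≠ p2 → p1 ∩ p2 = ∅ := by
          intro p1 hp1 p2 hp2 hne
          rw [hP, Finset.mem_union] at hp1 hp2
          rcases hp1 with hp1 | hp1 <;> rcases hp2 with hp2 | hp2
          · exact hMdisj p1 hp1 p2 hp2 hne
          · obtain ⟨x, hxR, rfl⟩ := Finset.mem_image.mp hp2
            have hxnot : x ∉ p1 := by
              intro hx
              have : x ∈ M.biUnion id := Finset.mem_biUnion.mpr ⟨p1, hp1, hx⟩
              rw [hR, Finset.mem_sdiff] at hxR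
              exact hxR.2 this
            exact Finset.inter_singleton_of_notMem hxnot
          · obtain ⟨x, hxR, rfl⟩ := Finset.mem_image.mp hp1
            have hxnot : x ∉ p2 := by
              intro hx
              have : x ∈ M.biUnion id := Finset.mem_biUnion.mpr ⟨p2, hp2, hx⟩
              rw [hR, Finset.mem_sdiff] at hxR
              exact hxR.2 this
            exact Finset.singleton_inter_of_notMem hxnot
          · obtain ⟨x, hxR, rfl⟩ := Finset.mem_image.mp hp1
            obtain ⟨y, hyR, rfl⟩ := Finset.mem_image.mp hp2
            have hxy : x ≠ y := by
              intro h; subst h; exact hne rfl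
            exact Finset.singleton_inter_of_notMem (by simpa using hxy)
        have hPU : P.biUnion id = S := by
          apply Finset.Subset.antisymm
          · intro x hx
            obtain ⟨q, hq, hxq⟩ := Finset.mem_biUnion.mp hx
            rw [hP, Finset.mem_union] at hq
            rcases hq with hq | hq
            · exact ((hDsub q (hMD q hq).1).1) hxq
            · obtain ⟨y, hyR, rfl⟩ := Finset.mem_image.mp hq
              simp only [id_eq, Finset.mem_singleton] at hxq
              subst hxq
              rw [hR, Finset.mem_sdiff] at hyR
              exact hyR.1
          · intro x hx
            by_cases hxM : x ∈ M.biUnion id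
            · obtain ⟨m, hm, hxm⟩ := Finset.mem_biUnion.mp hxM
              exact Finset.mem_biUnion.mpr ⟨m, by rw [hP]; exact Finset.mem_union_left _ hm, hxm⟩
            · have hxR : x ∈ R := by rw [hR, Finset.mem_sdiff]; exact ⟨hx, hxM⟩
              refine Finset.mem_biUnion.mpr ⟨{x}, ?_, Finset.mem_singleton_self x⟩
              rw [hP]
              exact Finset.mem_union_right _ (Finset.mem_image.mpr ⟨x, hxR, rfl⟩)
        have hPparts : ∀ p ∈ P, ∀ b' : ℕ, p.card ≤ 2*b' + 1 → 2*b' ≤ p.card + 1 →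
            ∃ B ⊆ p, B.card = b' ∧ GoodCol C p B := by
          intro p hp
          rw [hP, Finset.mem_union] at hp
          rcases hp with hp | hp
          · obtain ⟨hpS, _, hpne, _⟩ := hDsub p (hMD p hp).1
            have : p.card < S.card := Finset.card_lt_card (Finset.ssubset_iff_subset_ne.mpr ⟨hpS, hpne⟩)
            exact ih p (by omega)
          · obtain ⟨x, _, rfl⟩ := Finset.mem_image.mp hp
            have : ({x} : Finset α).card = 1 := Finset.card_singleton x
            exact ih {x} (by omega)
        obtain ⟨B, hBsub, hBcard, hBgood⟩ :=
          combine C P hPdisj hPparts b (by rw [hPU]; exact h1) (by rw [hPU]; exact h2)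
        rw [hPU] at hBsub
        refine ⟨B, hBsub, hBcard, ?_⟩
        intro c hc
        by_cases hcS : (c ∩ S).Nonempty
        · by_cases hcSe : c ∩ S = S
          · -- c covers all of S
            have hSc : S ⊆ c := by
              intro x hx
              have hx' : x ∈ c ∩ S := by rw [hcSe]; exact hx
              exact (Finset.mem_inter.mp hx').1
            have hBc : B ∩ c = B := Finset.inter_eq_left.mpr (hBsub.trans hSc)
            have hWc : (S \ B) ∩ c = S \ B :=
              Finset.inter_eq_left.mpr ((Finset.sdiff_subset).trans hSc)
            have hW : (S \ B).card = S.card - b := by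
              rw [Finset.card_sdiff_of_subset hBsub, hBcard]
            have hble : b ≤ S.card := hBcard ▸ Finset.card_le_card hBsub
            rw [hBc, hWc, hW, hBcard, abs_le]
            constructor <;> push_cast <;> omega
          · -- c ∩ S is a proper nonempty part: find the maximal block containing it
            have hdD : c ∩ S ∈ D := by
              rw [hD, Finset.mem_filter, Finset.mem_powerset]
              exact ⟨Finset.inter_subset_right, hcS, hcSe, c, hc, rfl⟩
            set E : Finset (Finset α) := D.filter (fun d' => c ∩ S ⊆ d') with hE
            have hdE : c ∩ S ∈ E := by
              rw [hE, Finset.mem_filter]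
              exact ⟨hdD, Finset.Subset.refl _⟩
            obtain ⟨m, hmE, hmmax⟩ : ∃ m ∈ E, ∀ x ∈ E, ¬ m < x := by
              obtain ⟨m, hm1, hm2⟩ := Finset.exists_maximal (s := E) ⟨_, hdE⟩
              exact ⟨m, hm1, fun x hx hlt => hlt.not_ge (hm2 hx hlt.le)⟩
            rw [hE, Finset.mem_filter] at hmE
            obtain ⟨hmD, hdm⟩ := hmE
            have hmM : m ∈ M := by
              rw [hM, Finset.mem_filter]
              refine ⟨hmD, fun d' hd' hsub => ?_⟩
              by_contra hne
              have hd'E : d' ∈ E := by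
                rw [hE, Finset.mem_filter]
                exact ⟨hd', hdm.trans hsub⟩
              exact hmmax d' hd'E (lt_of_le_of_ne hsub hne)
            have hmP : m ∈ P := by rw [hP]; exact Finset.mem_union_left _ hmM
            have hmS : m ⊆ S := (hDsub m hmD).1
            have hgood := hBgood m hmP c hc
            -- rewrite the two intersections
            have e1 : B ∩ c = (B ∩ m) ∩ c := by
              ext x
              simp only [Finset.mem_inter]
              constructor
              · rintro ⟨hxB, hxc⟩
                have hxS : x ∈ S := hBsub hxB
                have hxm : x ∈ m := hdm (Finset.mem_inter.mpr ⟨hxc, hxS⟩)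
                exact ⟨⟨hxB, hxm⟩, hxc⟩
              · rintro ⟨⟨hxB, _⟩, hxc⟩
                exact ⟨hxB, hxc⟩
            have e2 : (S \ B) ∩ c = (m \ (B ∩ m)) ∩ c := by
              ext x
              simp only [Finset.mem_inter, Finset.mem_sdiff]
              constructor
              · rintro ⟨⟨hxS, hxB⟩, hxc⟩
                have hxm : x ∈ m := hdm (Finset.mem_inter.mpr ⟨hxc, hxS⟩)
                exact ⟨⟨hxm, fun h => hxB h.1⟩, hxc⟩
              · rintro ⟨⟨hxm, hxB⟩, hxc⟩
                refine ⟨⟨hmS hxm, fun h => hxB ⟨h, hxm⟩⟩, hxc⟩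
            rw [e1, e2]
            exact hgood
        · -- c misses S entirely
          have h1' : B ∩ c = ∅ := by
            apply Finset.eq_empty_of_forall_notMem
            intro x hx
            rcases Finset.mem_inter.mp hx with ⟨hxB, hxc⟩
            exact hcS ⟨x, Finset.mem_inter.mpr ⟨hxc, hBsub hxB⟩⟩
          have h2' : (S \ B) ∩ c = ∅ := by
            apply Finset.eq_empty_of_forall_notMem
            intro x hx
            rcases Finset.mem_inter.mp hx with ⟨hxW, hxc⟩
            exact hcS ⟨x, Finset.mem_inter.mpr ⟨hxc, (Finset.mem_sdiff.mp hxW).1⟩⟩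
          rw [h1', h2']
          simp

/-- The two-color theorem of laminarity: any subset `N'` of size `2k-1` or `2k` can be
split into a black set `B` of size `k` and a white set `N' \ B` so that inside every
coalition of a laminar family the numbers of black and white agents differ by at most 1. -/
theorem two_color_laminar {α : Type*} [DecidableEq α] (N N' : Finset α)
    (hsub : N' ⊆ N) (hne : N'.Nonempty) (k : ℕ) (hk : 1 ≤ k)
    (hcard : N'.card = 2 * k - 1 ∨ N'.card = 2 * k)
    (C : Set (Finset α))
    (hC : ∀ c ∈ C, c.Nonempty ∧ c ⊆ N)
    (hlam : ∀ c1 ∈ C, ∀ c2 ∈ C, (c1 ∩ c2).Nonempty → c1 ⊆ c2 ∨ c2 ⊆ c1) :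
    ∃ B ⊆ N', B.card = k ∧
      ∀ c ∈ C, |((B ∩ c).card : ℤ) - (((N' \ B) ∩ c).card : ℤ)| ≤ 1 := by
  obtain ⟨B, hB, hBcard, hgood⟩ :=
    twoColorKey C hlam N'.card N' le_rfl k (by omega) (by omega)
  exact ⟨B, hB, hBcard, hgood⟩
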